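/- arXiv:1605.05112 — 4 statements merged into one kernel-verified Lean document; each statement's English description precedes it below -/
import Mathlib

section
/- Let C, D be small categories, E a type, and F : C ⥤ Discrete E, G : D ⥤ Discrete E functors, and let C ×_E D be the full subcategory of C × D on the objects (c,d) with F(c) = G(d). Then the set of connected components of C ×_E D is in bijection with the fiber product of sets (q C) ×_E (q D), i.e. with the set of pairs (u,v) with u a connected component of C and v a connected component of D such that the maps q C → E and q D → E induced by F and G send u and v to the same element of E. -/
open CategoryTheory



section Aux

variable {C D E : Type} [SmallCategory C] [SmallCategory D]
variable (F : C ⥤ Discrete E) (G : D ⥤ Discrete E)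

lemma discrete_eq_of_zigzag {C : Type*} [Category C] {E : Type*} (F : C ⥤ Discrete E)
    {c c' : C} (h : Zigzag c c') : F.obj c = F.obj c' :=
  Discrete.ext (eq_of_zigzag E (zigzag_obj_of_zigzag F h))

lemma zig_left {c c' : C} (d : D) (h : Zigzag c c') (hc : F.obj c = G.obj d)
    (hc' : F.obj c' = G.obj d) :
    Zigzag (⟨(c, d), hc⟩ : ObjectProperty.FullSubcategory fun p : C × D => F.obj p.1 = G.obj p.2)
      ⟨(c', d), hc'⟩ := by
  induction h with
  | refl => exact Relation.ReflTransGen.refl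
  | @tail b c' hz hab ih =>
      have hb : F.obj b = G.obj d := (discrete_eq_of_zigzag F hz).symm.trans hc
      refine Relation.ReflTransGen.tail (ih hb) ?_
      rcases hab with ⟨⟨f⟩⟩ | ⟨⟨f⟩⟩
      · exact Or.inl ⟨ObjectProperty.homMk (f, 𝟙 d)⟩
      · exact Or.inr ⟨ObjectProperty.homMk (f, 𝟙 d)⟩

lemma zig_right (c : C) {d d' : D} (h : Zigzag d d') (hc : F.obj c = G.obj d)
    (hc' : F.obj c = G.obj d') :
    Zigzag (⟨(c, d), hc⟩ : ObjectProperty.FullSubcategory fun p : C × D => F.obj p.1 = G.obj p.2)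
      ⟨(c, d'), hc'⟩ := by
  induction h with
  | refl => exact Relation.ReflTransGen.refl
  | @tail b d' hz hab ih =>
      have hb : F.obj c = G.obj b := hc.trans (discrete_eq_of_zigzag G hz)
      refine Relation.ReflTransGen.tail (ih hb) ?_
      rcases hab with ⟨⟨f⟩⟩ | ⟨⟨f⟩⟩
      · exact Or.inl ⟨ObjectProperty.homMk (𝟙 c, f)⟩
      · exact Or.inr ⟨ObjectProperty.homMk (𝟙 c, f)⟩

end Aux


/-- Let `C`, `D` be small categories, `E` a type, and
`F : C ⥤ Discrete E`, `G : D ⥤ Discrete E` functors, and let `C ×_E D` be the full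
subcategory of `C × D` on the objects `(c,d)` with `F(c) = G(d)`.  Then the set of
connected components of `C ×_E D` is in bijection with the fiber product of sets
`(q C) ×_E (q D)`: the set of pairs `(u,v)` of connected components of `C` and `D` which
are sent to the same element of `E` by the maps induced by `F` and `G` (given by
`ConnectedComponents.liftFunctor`). -/
theorem stmt4 (C D E : Type) [SmallCategory C] [SmallCategory D]
    (F : C ⥤ Discrete E) (G : D ⥤ Discrete E) :
    Nonempty (ConnectedComponents (ObjectProperty.FullSubcategory fun p : C × D => F.obj p.1 = G.obj p.2) ≃
      {p : ConnectedComponents C × ConnectedComponents D //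
        ConnectedComponents.liftFunctor C F p.1 = ConnectedComponents.liftFunctor D G p.2}) := by
  set P := ObjectProperty.FullSubcategory fun p : C × D => F.obj p.1 = G.obj p.2 with hP
  let φ : ConnectedComponents P →
      {p : ConnectedComponents C × ConnectedComponents D //
        ConnectedComponents.liftFunctor C F p.1 = ConnectedComponents.liftFunctor D G p.2} :=
    Quotient.lift
      (fun x => ⟨(Quotient.mk _ x.obj.1, Quotient.mk _ x.obj.2),
        congrArg Discrete.as x.property⟩)
      (by
        intro x y h
        have h1 : Zigzag x.obj.1 y.obj.1 :=
          zigzag_obj_of_zigzag (ObjectProperty.ι _ ⋙ CategoryTheory.Prod.fst C D) h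
        have h2 : Zigzag x.obj.2 y.obj.2 :=
          zigzag_obj_of_zigzag (ObjectProperty.ι _ ⋙ CategoryTheory.Prod.snd C D) h
        exact Subtype.ext (Prod.ext (Quotient.sound h1) (Quotient.sound h2)))
  refine ⟨Equiv.ofBijective φ ⟨?_, ?_⟩⟩
  · rintro ⟨⟨⟨c, d⟩, hcd⟩⟩ ⟨⟨⟨c', d'⟩, hcd'⟩⟩ h
    have h1 : Zigzag c c' := Quotient.exact (congrArg (fun p => p.1.1) h)
    have h2 : Zigzag d d' := Quotient.exact (congrArg (fun p => p.1.2) h)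
    refine Quotient.sound ?_
    have hc' : F.obj c' = G.obj d := (discrete_eq_of_zigzag F h1).symm.trans hcd
    exact (zig_left F G d h1 hcd hc').trans
      (zig_right F G c' h2 hc' hcd')
  · rintro ⟨⟨u, v⟩, huv⟩
    obtain ⟨c, rfl⟩ := Quotient.exists_rep u
    obtain ⟨d, rfl⟩ := Quotient.exists_rep v
    exact ⟨Quotient.mk _ (⟨(c, d), Discrete.ext huv⟩ : P), rfl⟩
end

section
/- Let C, D be small categories, E a type, and F : C ⥤ Discrete E, G : D ⥤ Discrete E functors, and let C ×_E D be the full subcategory of C × D on the objects (c,d) with F(c) = G(d). Then the set of isomorphism classes of objects of C ×_E D is in bijection with the fiber product of sets (p C) ×_E (p D), i.e. with the set of pairs (u,v) with u an isomorphism class of objects of C and v an isomorphism class of objects of D such that the maps p C → E and p D → E induced by F and G send u and v to the same element of E. -/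
open CategoryTheory

/-- The map `p C → E` on isomorphism classes of objects induced by a functor
`F : C ⥤ Discrete E` into a discrete category (isomorphic objects are sent to equal
elements of `E`). -/
def isoClassesLift {C : Type} [SmallCategory C] {E : Type} (F : C ⥤ Discrete E) :
    Quotient (isIsomorphicSetoid C) → E :=
  Quotient.lift (fun c => (F.obj c).as)
    (fun _ _ h => Discrete.eq_of_hom (F.map h.some.hom))

/-- Let `C`, `D` be small categories, `E` a type, and
`F : C ⥤ Discrete E`, `G : D ⥤ Discrete E` functors, and let `C ×_E D` be the full
subcategory of `C × D` on the objects `(c,d)` with `F(c) = G(d)`.  Then the set of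
isomorphism classes of objects of `C ×_E D` is in bijection with the fiber product of
sets `(p C) ×_E (p D)`: pairs `(u,v)` of an isomorphism class of `C` and one of `D`
which are sent to the same element of `E` by the maps induced by `F` and `G`. -/
theorem stmt8 (C D E : Type) [SmallCategory C] [SmallCategory D]
    (F : C ⥤ Discrete E) (G : D ⥤ Discrete E) :
    Nonempty (Quotient (isIsomorphicSetoid (ObjectProperty.FullSubcategory fun p : C × D => F.obj p.1 = G.obj p.2)) ≃
      {p : Quotient (isIsomorphicSetoid C) × Quotient (isIsomorphicSetoid D) //
        isoClassesLift F p.1 = isoClassesLift G p.2}) := by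
  refine ⟨Equiv.ofBijective
    (Quotient.lift
      (fun x => ⟨(⟦x.obj.1⟧, ⟦x.obj.2⟧), by
        simpa [isoClassesLift] using congrArg Discrete.as x.property⟩)
      ?_) ⟨?_, ?_⟩⟩
  · rintro x y ⟨e⟩
    exact Subtype.ext (Prod.ext
      (Quotient.sound ⟨(ObjectProperty.ι _ ⋙ CategoryTheory.Prod.fst C D).mapIso e⟩)
      (Quotient.sound ⟨(ObjectProperty.ι _ ⋙ CategoryTheory.Prod.snd C D).mapIso e⟩))
  · rintro ⟨x⟩ ⟨y⟩ h
    obtain ⟨h1, h2⟩ := Prod.mk.injEq .. ▸ congrArg Subtype.val h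
    obtain ⟨e1⟩ := Quotient.exact h1
    obtain ⟨e2⟩ := Quotient.exact h2
    exact Quotient.sound ⟨ObjectProperty.isoMk _ ⟨(e1.hom, e2.hom), (e1.inv, e2.inv), Prod.ext e1.hom_inv_id e2.hom_inv_id, Prod.ext e1.inv_hom_id e2.inv_hom_id⟩⟩
  · rintro ⟨⟨u, v⟩, h⟩
    obtain ⟨c, rfl⟩ := Quotient.exists_rep u
    obtain ⟨d, rfl⟩ := Quotient.exists_rep v
    exact ⟨⟦⟨(c, d), Discrete.ext h⟩⟧, rfl⟩
end

section
/- Let C be a small category admitting an equivalence of categories to a discrete category, and let γ : Obj(C) → q C be the map sending each object to its connected component. Then for all objects a, b of C, the hom-set Hom_C(a,b) has at most one element, and it is nonempty if and only if γ(a) = γ(b); consequently C is isomorphic, as a category, to the equivalence-relation category (Obj C)[γ]. -/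
open CategoryTheory

/-- The equivalence-relation category `A[f]` associated to a function `f : A → B`:
objects are the elements of `A`, and there is exactly one morphism `a ⟶ a'` when
`f a = f a'` and no morphisms otherwise. -/
def EqRelCat {A B : Type} (_f : A → B) : Type := A

instance EqRelCat.category {A B : Type} (f : A → B) : Category (EqRelCat f) where
  Hom a b := PLift (f a = f b)
  id _ := ⟨rfl⟩
  comp g h := ⟨g.down.trans h.down⟩

lemma discrete_eq_of_zigzag_s13 {A : Type} {a b : Discrete A} (h : Zigzag a b) : a = b := by
  induction h with
  | refl => rfl
  | tail _ hz ih =>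
    rcases hz with ⟨⟨f⟩⟩ | ⟨⟨f⟩⟩
    · exact ih.trans (Discrete.ext (Discrete.eq_of_hom f))
    · exact ih.trans (Discrete.ext (Discrete.eq_of_hom f)).symm

/-- Let `C` be a small category admitting an equivalence of categories
to a discrete category, and let `γ : Obj(C) → q C` be the map sending each object to its
connected component.  Then every hom-set `Hom_C(a,b)` has at most one element, it is
nonempty if and only if `γ a = γ b`, and consequently `C` is isomorphic, as a category
(i.e. isomorphic in `Cat`), to the equivalence-relation category `(Obj C)[γ]`. -/
theorem stmt13 (C : Type) [SmallCategory C]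
    (h : ∃ A : Type, Nonempty (C ≌ Discrete A)) :
    (∀ a b : C, Subsingleton (a ⟶ b)) ∧
    (∀ a b : C, (Nonempty (a ⟶ b) ↔
      (Quotient.mk (Zigzag.setoid C) a : ConnectedComponents C) =
        Quotient.mk (Zigzag.setoid C) b)) ∧
    Nonempty (Cat.of C ≅
      Cat.of (EqRelCat (fun c : C =>
        (Quotient.mk (Zigzag.setoid C) c : ConnectedComponents C)))) := by
  obtain ⟨A, ⟨e⟩⟩ := h
  have hsub : ∀ a b : C, Subsingleton (a ⟶ b) := by
    intro a b
    constructor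
    intro f g
    apply e.functor.map_injective
    apply Subsingleton.elim
  have hiff : ∀ a b : C, (Nonempty (a ⟶ b) ↔
      (Quotient.mk (Zigzag.setoid C) a : ConnectedComponents C) =
        Quotient.mk (Zigzag.setoid C) b) := by
    intro a b
    constructor
    · rintro ⟨f⟩
      exact Quotient.sound (Zigzag.of_hom f)
    · intro hq
      have hz : Zigzag a b := Quotient.exact hq
      have : e.functor.obj a = e.functor.obj b :=
        discrete_eq_of_zigzag_s13 (zigzag_obj_of_zigzag e.functor hz)
      exact ⟨e.functor.preimage (eqToHom this)⟩
  refine ⟨hsub, hiff, ⟨?_⟩⟩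
  let γ : C → ConnectedComponents C := fun c => Quotient.mk (Zigzag.setoid C) c
  let F : C ⥤ EqRelCat γ :=
    { obj := fun c => c
      map := fun {a b} f => ⟨(hiff a b).1 ⟨f⟩⟩ }
  let G : EqRelCat γ ⥤ C :=
    { obj := fun c => c
      map := fun {a b} f => ((hiff a b).2 f.down).some
      map_id := fun a => (hsub a a).elim _ _
      map_comp := fun f g => (hsub _ _).elim _ _ }
  refine ⟨F.toCatHom, G.toCatHom, ?_, ?_⟩
  · apply Cat.Hom.ext
    show F ⋙ G = Functor.id C
    refine CategoryTheory.Functor.ext (fun a => rfl) (fun a b f => ?_)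
    exact (hsub a b).elim _ _
  · apply Cat.Hom.ext
    show G ⋙ F = Functor.id (EqRelCat γ)
    refine CategoryTheory.Functor.ext (fun a => rfl) (fun a b f => ?_)
    apply Subsingleton.elim (α := PLift _)
end

section
/- Let Z be a type, let C and D be small categories with equivalences C ≌ Discrete A and D ≌ Discrete B, and let F : C ⥤ Discrete Z, G : D ⥤ Discrete Z be functors, inducing maps a : A → Z and b : B → Z. Let C ×_Z D be the full subcategory of C × D on the objects (c,d) with F(c) = G(d). Then C ×_Z D is equivalent to the discrete category on the set {(x,y) ∈ A × B : a(x) = b(y)}; in particular the fiber product of two homotopically discrete categories over a discrete category is homotopically discrete, and its discretization is the fiber product of the discretizations. -/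
open CategoryTheory

/-- Let `Z` be a type, let `C` and `D` be small categories with
equivalences `eC : C ≌ Discrete A` and `eD : D ≌ Discrete B`, and let
`F : C ⥤ Discrete Z`, `G : D ⥤ Discrete Z` be functors, inducing maps `a : A → Z` and
`b : B → Z` (where `a x` is the element of `Z` picked out by `F` on the object of `C`
corresponding to `x`, and similarly for `b`).  Let `C ×_Z D` be the full subcategory of
`C × D` on the objects `(c,d)` with `F(c) = G(d)`.  Then `C ×_Z D` is equivalent to the
discrete category on the set `{(x,y) ∈ A × B : a x = b y}`; in particular the fiber
product of two homotopically discrete categories over a discrete category is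
homotopically discrete, and its discretization is the fiber product of the
discretizations. -/
theorem stmt16 (C D Z A B : Type) [SmallCategory C] [SmallCategory D]
    (F : C ⥤ Discrete Z) (G : D ⥤ Discrete Z)
    (eC : C ≌ Discrete A) (eD : D ≌ Discrete B) :
    Nonempty ((ObjectProperty.FullSubcategory fun p : C × D => F.obj p.1 = G.obj p.2) ≌
      Discrete {p : A × B //
        (F.obj (eC.inverse.obj (Discrete.mk p.1))).as =
          (G.obj (eD.inverse.obj (Discrete.mk p.2))).as}) := by
  have hC : ∀ c : C, F.obj (eC.inverse.obj (eC.functor.obj c)) = F.obj c := fun c =>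
    Discrete.ext (Discrete.eq_of_hom (F.map (eC.unitInv.app c)))
  have hD : ∀ d : D, G.obj (eD.inverse.obj (eD.functor.obj d)) = G.obj d := fun d =>
    Discrete.ext (Discrete.eq_of_hom (G.map (eD.unitInv.app d)))
  -- forward functor
  let Phi : (ObjectProperty.FullSubcategory fun p : C × D => F.obj p.1 = G.obj p.2) ⥤
      Discrete {p : A × B //
        (F.obj (eC.inverse.obj (Discrete.mk p.1))).as =
          (G.obj (eD.inverse.obj (Discrete.mk p.2))).as} :=
    { obj := fun p => Discrete.mk ⟨((eC.functor.obj p.obj.1).as, (eD.functor.obj p.obj.2).as),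
        by
          show (F.obj (eC.inverse.obj (eC.functor.obj p.obj.1))).as =
            (G.obj (eD.inverse.obj (eD.functor.obj p.obj.2))).as
          rw [hC, hD, p.property]⟩
      map := fun {p q} f => eqToHom (Discrete.ext (Subtype.ext
        (Prod.ext (Discrete.eq_of_hom (eC.functor.map f.hom.1))
          (Discrete.eq_of_hom (eD.functor.map f.hom.2)))))
      map_id := fun _ => Subsingleton.elim _ _
      map_comp := fun _ _ => Subsingleton.elim _ _ }
  let Psi : Discrete {p : A × B //
        (F.obj (eC.inverse.obj (Discrete.mk p.1))).as =
          (G.obj (eD.inverse.obj (Discrete.mk p.2))).as} ⥤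
      (ObjectProperty.FullSubcategory fun p : C × D => F.obj p.1 = G.obj p.2) :=
    Discrete.functor fun s =>
      ⟨(eC.inverse.obj ⟨s.1.1⟩, eD.inverse.obj ⟨s.1.2⟩), Discrete.ext s.2⟩
  refine ⟨CategoryTheory.Equivalence.mk Phi Psi ?_ ?_⟩
  · -- unit iso
    refine NatIso.ofComponents (fun p =>
      (ObjectProperty.ι _).preimageIso
        ((eC.unitIso.app p.obj.1).prod (eD.unitIso.app p.obj.2))) ?_
    intro p q f
    refine ObjectProperty.hom_ext _ (Prod.ext ?_ ?_)
    · exact eC.functor.map_injective (Subsingleton.elim _ _)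
    · exact eD.functor.map_injective (Subsingleton.elim _ _)
  · -- counit iso
    refine NatIso.ofComponents (fun s => Discrete.eqToIso (Subtype.ext (Prod.ext
      (Discrete.eq_of_hom (eC.counitIso.hom.app ⟨s.as.1.1⟩))
      (Discrete.eq_of_hom (eD.counitIso.hom.app ⟨s.as.1.2⟩))))) ?_
    intros; exact Subsingleton.elim _ _
end
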